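/- Let f : ℝ → ℝⁿ be continuous, x ∈ ℝ and r > 0. If there exists ε > 0 with f(x+ε) ∉ B(f(x),r) or f(x−ε) ∉ B(f(x),r), then r ≤ ℋ¹_∞(f(ℝ) ∩ B(f(x),r)) ≤ 2r. -/

import Mathlib

open ENNReal

/-- 1-dimensional Hausdorff content: infimum over countable covers of the
sum of diameters. -/
noncomputable def hContent {n : ℕ} (F : Set (EuclideanSpace ℝ (Fin n))) : ℝ≥0∞ :=
  ⨅ (U : ℕ → Set (EuclideanSpace ℝ (Fin n))) (_ : F ⊆ ⋃ i, U i),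
    ∑' i, EMetric.diam (U i)

theorem hContent_ball_bounds {n : ℕ}
    (f : ℝ → EuclideanSpace ℝ (Fin n)) (hf : Continuous f)
    (x r : ℝ) (hr : 0 < r)
    (hexit : ∃ ε > 0, f (x + ε) ∉ Metric.ball (f x) r ∨
      f (x - ε) ∉ Metric.ball (f x) r) :
    ENNReal.ofReal r ≤ hContent (Set.range f ∩ Metric.ball (f x) r) ∧
      hContent (Set.range f ∩ Metric.ball (f x) r) ≤ ENNReal.ofReal (2 * r) := by
  obtain ⟨ε, hε, hcase⟩ := hexit
  set S := Set.range f ∩ Metric.ball (f x) r with hS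
  have hg : Continuous fun t => dist (f t) (f x) := hf.dist continuous_const
  have key : Set.Ico (0:ℝ) r ⊆ (fun y => dist y (f x)) '' S := by
    rintro s ⟨hs0, hsr⟩
    rcases hcase with h | h
    · have hrd : r ≤ dist (f (x + ε)) (f x) := by
        simpa [Metric.mem_ball] using h
      have hmem : s ∈ Set.Icc (dist (f x) (f x)) (dist (f (x + ε)) (f x)) := by
        simp only [dist_self]
        exact ⟨hs0, by linarith⟩
      obtain ⟨t, _, ht⟩ :=
        intermediate_value_Icc (by linarith : x ≤ x + ε) hg.continuousOn hmem
      exact ⟨f t, ⟨⟨t, rfl⟩, by simp only [Metric.mem_ball]; rw [show dist (f t) (f x) = s from ht]; exact hsr⟩, ht⟩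
    · have hrd : r ≤ dist (f (x - ε)) (f x) := by
        simpa [Metric.mem_ball] using h
      have hmem : s ∈ Set.Icc (dist (f x) (f x)) (dist (f (x - ε)) (f x)) := by
        simp only [dist_self]
        exact ⟨hs0, by linarith⟩
      obtain ⟨t, _, ht⟩ :=
        intermediate_value_Icc' (by linarith : x - ε ≤ x) hg.continuousOn hmem
      exact ⟨f t, ⟨⟨t, rfl⟩, by simp only [Metric.mem_ball]; rw [show dist (f t) (f x) = s from ht]; exact hsr⟩, ht⟩
  constructor
  · refine le_iInf fun U => le_iInf fun hU => ?_
    have hvol : ENNReal.ofReal r = MeasureTheory.volume (Set.Ico (0:ℝ) r) := by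
      simp [Real.volume_Ico]
    rw [hvol]
    have hsub : Set.Ico (0:ℝ) r ⊆ ⋃ i, (fun y => dist y (f x)) '' (U i ∩ S) := by
      intro s hs
      obtain ⟨y, hyS, hys⟩ := key hs
      obtain ⟨i, hi⟩ := Set.mem_iUnion.1 (hU hyS)
      exact Set.mem_iUnion.2 ⟨i, ⟨y, ⟨hi, hyS⟩, hys⟩⟩
    calc MeasureTheory.volume (Set.Ico (0:ℝ) r)
        ≤ MeasureTheory.volume (⋃ i, (fun y => dist y (f x)) '' (U i ∩ S)) :=
          MeasureTheory.measure_mono hsub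
      _ ≤ ∑' i, MeasureTheory.volume ((fun y => dist y (f x)) '' (U i ∩ S)) :=
          MeasureTheory.measure_iUnion_le _
      _ ≤ ∑' i, EMetric.diam (U i) := by
          refine ENNReal.tsum_le_tsum fun i => ?_
          calc MeasureTheory.volume ((fun y => dist y (f x)) '' (U i ∩ S))
              ≤ EMetric.diam ((fun y => dist y (f x)) '' (U i ∩ S)) :=
                Real.volume_le_diam _
            _ ≤ 1 * EMetric.diam (U i ∩ S) :=
                (LipschitzWith.dist_left (f x)).ediam_image_le _
            _ ≤ EMetric.diam (U i) := by
                rw [one_mul]; exact EMetric.diam_mono Set.inter_subset_left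
  · have hcov : S ⊆ ⋃ i, (fun i : ℕ => if i = 0 then Metric.ball (f x) r else ∅) i := by
      intro y hy
      exact Set.mem_iUnion.2 ⟨0, by simpa using hy.2⟩
    refine le_trans (iInf₂_le (fun i : ℕ => if i = 0 then Metric.ball (f x) r else ∅) hcov) ?_
    rw [tsum_eq_single 0 (by intro i hi; simp only [hi, if_false]; exact EMetric.diam_empty)]
    simp only [if_pos rfl]
    calc EMetric.diam (Metric.ball (f x) r)
        ≤ 2 * ENNReal.ofReal r := by
          rw [← Metric.emetric_ball]; exact EMetric.diam_ball
      _ = ENNReal.ofReal (2 * r) := by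
          rw [ENNReal.ofReal_mul (by norm_num)]; norm_num
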